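/- The discrete Wigner function is normalized: for every matrix ρ : Matrix (ZMod d) (ZMod d) ℂ, Σ over u ∈ ZMod d × ZMod d of (1/d) * trace(A_u * ρ) = trace(ρ). -/
import Mathlib


open Matrix Complex

/-- ω = exp(2πi/d). -/
noncomputable def omegaC (d : ℕ) : ℂ := Complex.exp (2 * Real.pi * Complex.I / d)

/-- The clock matrix `Z`, with `Z x x = ω ^ x.val`. -/
noncomputable def Zmat (d : ℕ) : Matrix (ZMod d) (ZMod d) ℂ :=
  Matrix.diagonal (fun x => omegaC d ^ x.val)

/-- The shift matrix `X`, with `X x y = 1` iff `x = y + 1`. -/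
noncomputable def Xmat (d : ℕ) : Matrix (ZMod d) (ZMod d) ℂ :=
  Matrix.of fun x y => if x = y + 1 then 1 else 0

/-- The Heisenberg–Weyl operator `T_a`. -/
noncomputable def TW (d : ℕ) [NeZero d] (a : ZMod d × ZMod d) : Matrix (ZMod d) (ZMod d) ℂ :=
  omegaC d ^ ((-((2 : ZMod d)⁻¹ * a.1 * a.2)).val) • (Zmat d ^ a.1.val * Xmat d ^ a.2.val)

/-- The phase point operator at the origin, `A_0 = (1/d) • ∑ a, T_a`. -/
noncomputable def Apoint0 (d : ℕ) [NeZero d] : Matrix (ZMod d) (ZMod d) ℂ :=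
  (1 / (d : ℂ)) • ∑ a : ZMod d × ZMod d, TW d a

/-- The phase point operator `A_u = T_u * A_0 * T_uᴴ`. -/
noncomputable def Apoint (d : ℕ) [NeZero d] (u : ZMod d × ZMod d) : Matrix (ZMod d) (ZMod d) ℂ :=
  TW d u * Apoint0 d * (TW d u)ᴴ

/-! ### Auxiliary development -/

/-- The additive character `e x = ω ^ x.val`. -/
noncomputable def ee (d : ℕ) (x : ZMod d) : ℂ := omegaC d ^ x.val

section aux

set_option linter.unusedSectionVars false

variable (d : ℕ) [NeZero d]

lemma omega_prim : IsPrimitiveRoot (omegaC d) d :=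
  Complex.isPrimitiveRoot_exp d (NeZero.ne d)

lemma omega_pow_d : omegaC d ^ d = 1 := (omega_prim d).pow_eq_one

lemma omega_pow_mod (m : ℕ) : omegaC d ^ m = omegaC d ^ (m % d) := by
  conv_lhs => rw [← Nat.mod_add_div m d]
  rw [pow_add, pow_mul, omega_pow_d, one_pow, mul_one]

lemma ee_natCast (m : ℕ) : omegaC d ^ m = ee d (m : ZMod d) := by
  rw [omega_pow_mod, ee, ZMod.val_natCast]

lemma cast_val (x : ZMod d) : ((x.val : ℕ) : ZMod d) = x := by
  simp [ZMod.natCast_val, ZMod.cast_id]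

lemma ee_add (x y : ZMod d) : ee d (x + y) = ee d x * ee d y := by
  have h : x + y = ((x.val + y.val : ℕ) : ZMod d) := by
    push_cast [cast_val]; ring
  rw [h, ← ee_natCast, pow_add]
  rfl

lemma ee_zero : ee d 0 = 1 := by simp [ee]

lemma ee_mul_neg (x : ZMod d) : ee d x * ee d (-x) = 1 := by
  rw [← ee_add]; simp [ee_zero]

lemma omega_ne_zero : omegaC d ≠ 0 := Complex.exp_ne_zero _

lemma star_omega : star (omegaC d) = (omegaC d)⁻¹ := by
  rw [show star (omegaC d) = (starRingEnd ℂ) (omegaC d) from rfl, omegaC,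
    ← Complex.exp_conj, ← Complex.exp_neg]
  congr 1
  simp only [map_div₀, _root_.map_mul, map_ofNat, map_natCast, Complex.conj_I,
    Complex.conj_ofReal]
  ring

lemma star_ee (x : ZMod d) : star (ee d x) = ee d (-x) := by
  rw [ee, star_pow, star_omega, inv_pow]
  exact (eq_inv_of_mul_eq_one_left (by rw [mul_comm]; exact ee_mul_neg d x)).symm

lemma ee_eq_one_iff (c : ZMod d) : ee d c = 1 ↔ c = 0 := by
  constructor
  · intro hc
    have hdvd := ((omega_prim d).pow_eq_one_iff_dvd c.val).mp hc
    exact (ZMod.val_eq_zero c).mp (Nat.eq_zero_of_dvd_of_lt hdvd (ZMod.val_lt c))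
  · rintro rfl; exact ee_zero d

lemma sum_ee (c : ZMod d) :
    ∑ a : ZMod d, ee d (a * c) = if c = 0 then (d : ℂ) else 0 := by
  by_cases hc : c = 0
  · subst hc; simp [ee_zero, ZMod.card]
  · simp only [hc, if_false]
    have key : ee d c * ∑ a : ZMod d, ee d (a * c) = ∑ a : ZMod d, ee d (a * c) := by
      rw [Finset.mul_sum]
      have h1 : ∀ a : ZMod d, ee d c * ee d (a * c) = ee d ((a + 1) * c) := by
        intro a
        rw [← ee_add]
        congr 1
        ring
      simp_rw [h1]
      exact Fintype.sum_equiv (Equiv.addRight (1 : ZMod d)) _ _ (fun a => rfl)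
    have h2 : (ee d c - 1) * ∑ a : ZMod d, ee d (a * c) = 0 := by
      rw [sub_mul, one_mul, key, sub_self]
    rcases mul_eq_zero.mp h2 with h | h
    · exact absurd ((ee_eq_one_iff d c).mp (by linear_combination h)) hc
    · exact h

lemma two_mul_inv (hodd : Odd d) : (2 : ZMod d) * (2 : ZMod d)⁻¹ = 1 := by
  apply ZMod.mul_inv_of_unit
  have h2 : ((2 : ℕ) : ZMod d) = 2 := by norm_cast
  rw [← h2, ZMod.isUnit_iff_coprime]
  refine (Nat.prime_two.coprime_iff_not_dvd).mpr ?_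
  intro hdvd
  exact (Nat.not_odd_iff_even.mpr (even_iff_two_dvd.mpr hdvd)) hodd

lemma Xpow_apply (n : ℕ) (x y : ZMod d) :
    ((Xmat d) ^ n) x y = if x = y + (n : ZMod d) then 1 else 0 := by
  induction n generalizing y with
  | zero => simp [Matrix.one_apply]
  | succ n ih =>
    rw [pow_succ, Matrix.mul_apply]
    have h1 : ∀ k : ZMod d, ((Xmat d) ^ n) x k * Xmat d k y
        = if k = y + 1 then ((Xmat d) ^ n) x k else 0 := by
      intro k
      simp only [Xmat, Matrix.of_apply, mul_ite, mul_one, mul_zero]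
    simp_rw [h1]
    rw [Finset.sum_ite_eq' Finset.univ (y + 1) (fun k => ((Xmat d) ^ n) x k)]
    simp only [Finset.mem_univ, if_true, ih]
    congr 1
    have : y + 1 + (n : ZMod d) = y + ((n + 1 : ℕ) : ZMod d) := by push_cast; ring
    rw [this]

lemma Zpow_apply (m : ℕ) (x y : ZMod d) :
    ((Zmat d) ^ m) x y = if x = y then omegaC d ^ (x.val * m) else 0 := by
  rw [Zmat, Matrix.diagonal_pow, Matrix.diagonal_apply]
  simp [pow_mul, Pi.pow_apply]

lemma TW_apply (a : ZMod d × ZMod d) (x y : ZMod d) :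
    TW d a x y = if x = y + a.2
      then ee d (-((2 : ZMod d)⁻¹ * a.1 * a.2)) * ee d (x * a.1) else 0 := by
  rw [TW, Matrix.smul_apply, Matrix.mul_apply]
  have h1 : ∀ k : ZMod d, ((Zmat d) ^ a.1.val) x k * ((Xmat d) ^ a.2.val) k y
      = if k = x then omegaC d ^ (x.val * a.1.val) * ((Xmat d) ^ a.2.val) k y else 0 := by
    intro k
    rw [Zpow_apply]
    rcases eq_or_ne k x with h | h
    · subst h; simp
    · rw [if_neg (Ne.symm h), if_neg h, zero_mul]
  simp_rw [h1]
  rw [Finset.sum_ite_eq' Finset.univ x]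
  simp only [Finset.mem_univ, if_true, Xpow_apply, cast_val]
  have hs : omegaC d ^ (-((2 : ZMod d)⁻¹ * a.1 * a.2)).val
      = ee d (-((2 : ZMod d)⁻¹ * a.1 * a.2)) := rfl
  have hz : omegaC d ^ (x.val * a.1.val) = ee d (x * a.1) := by
    rw [ee_natCast]
    congr 1
    push_cast [cast_val]
    ring
  rw [smul_eq_mul, hs, hz]
  split <;> ring

lemma Apoint0_apply (hodd : Odd d) (x y : ZMod d) :
    Apoint0 d x y = if y = -x then 1 else 0 := by
  have h2 := two_mul_inv d hodd
  rw [Apoint0, Matrix.smul_apply, Matrix.sum_apply]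
  rw [Fintype.sum_prod_type]
  simp_rw [TW_apply]
  have hcond : ∀ a₂ : ZMod d, (x = y + a₂) = (a₂ = x - y) := by
    intro a₂
    apply propext
    constructor
    · intro h; rw [h]; ring
    · intro h; rw [h]; ring
  simp_rw [hcond]
  have hsum : ∀ a₁ : ZMod d,
      (∑ a₂ : ZMod d, if a₂ = x - y
        then ee d (-((2 : ZMod d)⁻¹ * a₁ * a₂)) * ee d (x * a₁) else 0)
      = ee d (a₁ * ((2 : ZMod d)⁻¹ * (x + y))) := by
    intro a₁
    rw [Finset.sum_ite_eq' Finset.univ (x - y)]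
    simp only [Finset.mem_univ, if_true]
    rw [← ee_add]
    congr 1
    linear_combination (-(a₁ * x)) * h2
  simp_rw [hsum]
  rw [sum_ee d ((2 : ZMod d)⁻¹ * (x + y))]
  have hiff : ((2 : ZMod d)⁻¹ * (x + y) = 0) = (y = -x) := by
    apply propext
    constructor
    · intro h
      have h3 : (2 : ZMod d) * ((2 : ZMod d)⁻¹ * (x + y)) = 0 := by rw [h, mul_zero]
      rw [← mul_assoc, h2, one_mul] at h3
      linear_combination h3
    · intro h; rw [h]; ring
  simp only [hiff]
  have hd0 : (d : ℂ) ≠ 0 := Nat.cast_ne_zero.mpr (NeZero.ne d)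
  split
  · rw [smul_eq_mul]; field_simp
  · rw [smul_eq_mul, mul_zero]

lemma Apoint_apply (hodd : Odd d) (u : ZMod d × ZMod d) (x y : ZMod d) :
    Apoint d u x y = if x + y = 2 * u.2 then ee d (u.1 * (x - y)) else 0 := by
  rw [Apoint, Matrix.mul_apply]
  have hB : ∀ q : ZMod d, (TW d u * Apoint0 d) x q = TW d u x (-q) := by
    intro q
    rw [Matrix.mul_apply]
    have h1 : ∀ p : ZMod d, TW d u x p * Apoint0 d p q
        = if p = -q then TW d u x p else 0 := by
      intro p
      rw [Apoint0_apply d hodd]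
      rcases eq_or_ne p (-q) with h | h
      · have hq : q = -p := by rw [h]; ring
        rw [if_pos h, if_pos hq, mul_one]
      · have hq : q ≠ -p := fun hq => h (by rw [hq]; ring)
        rw [if_neg h, if_neg hq, mul_zero]
    simp_rw [h1]
    rw [Finset.sum_ite_eq' Finset.univ (-q)]
    simp only [Finset.mem_univ, if_true]
  simp_rw [hB, Matrix.conjTranspose_apply]
  have h1 : ∀ q : ZMod d, TW d u x (-q) * star (TW d u y q)
      = if q = u.2 - x then TW d u x (-q) * star (TW d u y q) else 0 := by
    intro q
    rcases eq_or_ne q (u.2 - x) with h | h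
    · rw [if_pos h]
    · rw [if_neg h, TW_apply]
      have hx : x ≠ -q + u.2 := by
        intro hx
        exact h (by rw [hx]; ring)
      rw [if_neg hx, zero_mul]
  rw [Finset.sum_congr rfl (fun q _ => h1 q)]
  rw [Finset.sum_ite_eq' Finset.univ (u.2 - x)]
  simp only [Finset.mem_univ, if_true]
  rw [TW_apply, TW_apply]
  have hx : x = -(u.2 - x) + u.2 := by ring
  rw [if_pos hx]
  have hyc : (y = u.2 - x + u.2) = (x + y = 2 * u.2) := by
    apply propext
    constructor
    · intro h; rw [h]; ring
    · intro h; linear_combination h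
  simp only [hyc]
  split
  · rw [star_mul', star_ee, star_ee]
    have : ee d (-(-((2:ZMod d)⁻¹ * u.1 * u.2))) * ee d (-((2:ZMod d)⁻¹ * u.1 * u.2)) = 1 := by
      rw [mul_comm]; exact ee_mul_neg d _
    calc ee d (-((2:ZMod d)⁻¹ * u.1 * u.2)) * ee d (x * u.1) *
          (ee d (-(-((2:ZMod d)⁻¹ * u.1 * u.2))) * ee d (-(y * u.1)))
        = (ee d (-(-((2:ZMod d)⁻¹ * u.1 * u.2))) * ee d (-((2:ZMod d)⁻¹ * u.1 * u.2))) *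
          (ee d (x * u.1) * ee d (-(y * u.1))) := by ring
      _ = ee d (x * u.1) * ee d (-(y * u.1)) := by rw [this, one_mul]
      _ = ee d (u.1 * (x - y)) := by
          rw [← ee_add]; congr 1; ring
  · rw [star_zero, mul_zero]

lemma sum_Apoint (hodd : Odd d) :
    ∑ u : ZMod d × ZMod d, Apoint d u = (d : ℂ) • (1 : Matrix (ZMod d) (ZMod d) ℂ) := by
  have h2 := two_mul_inv d hodd
  ext x y
  rw [Matrix.sum_apply]
  simp_rw [Apoint_apply d hodd]
  rw [Fintype.sum_prod_type]
  have hcond : ∀ u₂ : ZMod d, (x + y = 2 * u₂) = (u₂ = (2 : ZMod d)⁻¹ * (x + y)) := by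
    intro u₂
    apply propext
    constructor
    · intro h
      have : (2:ZMod d)⁻¹ * (x + y) = (2:ZMod d)⁻¹ * (2 * u₂) := by rw [h]
      rw [← mul_assoc, mul_comm ((2:ZMod d)⁻¹) 2, h2, one_mul] at this
      exact this.symm
    · intro h
      rw [h, ← mul_assoc, h2, one_mul]
  simp_rw [hcond]
  have hsum : ∀ u₁ : ZMod d,
      (∑ u₂ : ZMod d, if u₂ = (2 : ZMod d)⁻¹ * (x + y)
        then ee d (u₁ * (x - y)) else 0) = ee d (u₁ * (x - y)) := by
    intro u₁
    rw [Finset.sum_ite_eq' Finset.univ ((2 : ZMod d)⁻¹ * (x + y))]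
    simp
  simp_rw [hsum]
  rw [sum_ee d (x - y), Matrix.smul_apply, Matrix.one_apply]
  have : (x - y = 0) = (x = y) := by
    apply propext
    exact sub_eq_zero
  simp only [this]
  split
  · rw [smul_eq_mul, mul_one]
  · rw [smul_eq_mul, mul_zero]

end aux

/-- The discrete Wigner function is normalized. -/
theorem wigner_normalized (d : ℕ) [NeZero d] (hodd : Odd d) (hd : 1 < d)
    (ρ : Matrix (ZMod d) (ZMod d) ℂ) :
    ∑ u : ZMod d × ZMod d, (1 / (d : ℂ)) * (Apoint d u * ρ).trace = ρ.trace := by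
  have hd0 : (d : ℂ) ≠ 0 := Nat.cast_ne_zero.mpr (NeZero.ne d)
  rw [← Finset.mul_sum]
  have h1 : ∑ u : ZMod d × ZMod d, (Apoint d u * ρ).trace
      = ((∑ u : ZMod d × ZMod d, Apoint d u) * ρ).trace := by
    rw [Finset.sum_mul, Matrix.trace_sum]
  rw [h1, sum_Apoint d hodd, Matrix.smul_mul, one_mul, Matrix.trace_smul, smul_eq_mul]
  field_simp
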